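/- For real ν > -1 and n ≥ 1, the Laguerre functions L_n^ν (normalized Laguerre polynomials times x^{ν/2} e^{-x/2}) satisfy the integral identity (L_{n-1}^ν(x) L_n^ν(y) - L_{n-1}^ν(y) L_n^ν(x))/(x - y) = (1/2) ∫_0^1 [L_{n-1}^ν(tx) L_n^ν(ty) + L_{n-1}^ν(ty) L_n^ν(tx)] dt for all x ≠ y in (0,∞). -/

import Mathlib

open Finset

noncomputable def laguerrePoly (n : ℕ) (ν : ℝ) (x : ℝ) : ℝ :=
  ∑ k ∈ Finset.range (n + 1),
    (-1) ^ k * Real.Gamma ((n : ℝ) + ν + 1) /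
      (Real.Gamma ((k : ℝ) + ν + 1) * (Nat.factorial (n - k)) * (Nat.factorial k)) * x ^ k

/-- The orthonormal Laguerre function
`L_n^ν(x) = (Γ(n+1)/Γ(n+ν+1))^{1/2} ℓ_n^ν(x) x^{ν/2} e^{-x/2}`. -/
noncomputable def laguerreFun (n : ℕ) (ν : ℝ) (x : ℝ) : ℝ :=
  Real.sqrt (Real.Gamma ((n : ℝ) + 1) / Real.Gamma ((n : ℝ) + ν + 1)) *
    laguerrePoly n ν x * x ^ (ν / 2) * Real.exp (-x / 2)

noncomputable def lagCoeff (n : ℕ) (ν : ℝ) (k : ℕ) : ℝ :=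
  (-1) ^ k * Real.Gamma ((n : ℝ) + ν + 1) /
      (Real.Gamma ((k : ℝ) + ν + 1) * (Nat.factorial (n - k)) * (Nat.factorial k))

lemma gammaPos {ν : ℝ} (hν : -1 < ν) (k : ℕ) : 0 < Real.Gamma ((k : ℝ) + ν + 1) := by
  apply Real.Gamma_pos_of_pos
  have : (0:ℝ) ≤ (k:ℝ) := Nat.cast_nonneg k
  linarith

lemma gamma_succ {ν : ℝ} (hν : -1 < ν) (m : ℕ) :
    Real.Gamma ((↑(m+1) : ℝ) + ν + 1) = ((m:ℝ) + 1 + ν) * Real.Gamma ((m:ℝ) + ν + 1) := by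
  have h : ((↑(m+1) : ℝ) + ν + 1) = ((m:ℝ) + ν + 1) + 1 := by push_cast; ring
  rw [h, Real.Gamma_add_one]
  · ring_nf
  · have : (0:ℝ) ≤ (m:ℝ) := Nat.cast_nonneg m
    nlinarith

lemma keyA {ν : ℝ} (hν : -1 < ν) (m k : ℕ) (hk : k ≤ m) :
    (k : ℝ) * lagCoeff (m+1) ν k
      = ((m:ℝ) + 1) * lagCoeff (m+1) ν k - ((m:ℝ) + 1 + ν) * lagCoeff m ν k := by
  have hG := gamma_succ hν m
  have hF : ((Nat.factorial (m + 1 - k) : ℝ)) = ((m:ℝ) - k + 1) * (Nat.factorial (m - k)) := by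
    rw [Nat.succ_sub hk, Nat.factorial_succ]
    push_cast [Nat.cast_sub hk]
    ring
  have hΓk := (gammaPos hν k).ne'
  have hΓm := (gammaPos hν m).ne'  -- not quite the right form; Γ(m+ν+1)
  have hfk : ((Nat.factorial k : ℝ)) ≠ 0 := by positivity
  have hfmk : ((Nat.factorial (m - k) : ℝ)) ≠ 0 := by positivity
  have hmk1 : ((m:ℝ) - k + 1) ≠ 0 := by
    have : (k:ℝ) ≤ (m:ℝ) := by exact_mod_cast hk
    nlinarith
  unfold lagCoeff
  rw [hG, hF]
  field_simp
  ring

lemma keyB {ν : ℝ} (hν : -1 < ν) (m k : ℕ) (hk : k < m) :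
    ((k : ℝ) + 1) * (lagCoeff m ν (k+1) - lagCoeff (m+1) ν (k+1)) = lagCoeff m ν k := by
  have hG := gamma_succ hν k   -- Γ(k+1+ν+1) = (k+1+ν)Γ(k+ν+1)
  have hGm := gamma_succ hν m
  have hk1 : k + 1 ≤ m := hk
  have hF1 : m + 1 - (k+1) = m - k := by omega
  have hF2 : ((Nat.factorial (m - k) : ℝ)) = ((m:ℝ) - k) * (Nat.factorial (m - (k+1))) := by
    have h3 : m - k = (m - (k+1)) + 1 := by omega
    rw [h3]
    push_cast [Nat.factorial_succ, Nat.cast_sub hk1]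
    ring
  have hF3 : ((Nat.factorial (k+1) : ℝ)) = ((k:ℝ) + 1) * (Nat.factorial k) := by
    rw [Nat.factorial_succ]; push_cast; ring
  have hΓk := (gammaPos hν k).ne'
  have hΓk1 := (gammaPos hν (k+1)).ne'
  have hΓm := (gammaPos hν m).ne'
  have hfk : ((Nat.factorial k : ℝ)) ≠ 0 := by positivity
  have hfmk1 : ((Nat.factorial (m - (k+1)) : ℝ)) ≠ 0 := by positivity
  have hmk : ((m:ℝ) - k) ≠ 0 := by
    have : (k:ℝ) < (m:ℝ) := by exact_mod_cast hk
    nlinarith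
  have hk1ν : ((k:ℝ) + 1 + ν) ≠ 0 := by
    have : (0:ℝ) ≤ (k:ℝ) := Nat.cast_nonneg k
    nlinarith
  unfold lagCoeff
  rw [hGm, hF1, hF2, hF3, hG]
  push_cast
  field_simp
  ring

lemma keyB_edge {ν : ℝ} (hν : -1 < ν) (m : ℕ) :
    ((m:ℝ) + 1) * lagCoeff (m+1) ν (m+1) + lagCoeff m ν m = 0 := by
  have hΓm1 := (gammaPos hν (m+1)).ne'
  have hΓm := (gammaPos hν m).ne'
  have hfm : ((Nat.factorial m : ℝ)) ≠ 0 := by positivity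
  have hF : ((Nat.factorial (m+1) : ℝ)) = ((m:ℝ) + 1) * (Nat.factorial m) := by
    rw [Nat.factorial_succ]; push_cast; ring
  have h1 : lagCoeff (m+1) ν (m+1) = (-1)^(m+1) / (Nat.factorial (m+1)) := by
    unfold lagCoeff
    rw [Nat.sub_self, Nat.factorial_zero]
    rw [mul_comm (Real.Gamma ((↑(m+1) : ℝ) + ν + 1))]
    rw [Nat.cast_one, one_mul ((Real.Gamma ((↑(m+1) : ℝ) + ν + 1)))]
    have hf1 : ((Nat.factorial (m+1) : ℝ)) ≠ 0 := by positivity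
    field_simp
  have h2 : lagCoeff m ν m = (-1)^m / (Nat.factorial m) := by
    unfold lagCoeff
    rw [Nat.sub_self, Nat.factorial_zero]
    rw [mul_comm (Real.Gamma ((↑m : ℝ) + ν + 1))]
    rw [Nat.cast_one, one_mul ((Real.Gamma ((↑m : ℝ) + ν + 1)))]
    field_simp
  rw [h1, h2, hF, pow_succ]
  have hm1 : ((m:ℝ) + 1) ≠ 0 := by positivity
  field_simp
  ring

lemma laguerrePoly_eq (n : ℕ) (ν : ℝ) (x : ℝ) :
    laguerrePoly n ν x = ∑ k ∈ Finset.range (n + 1), lagCoeff n ν k * x ^ k := rfl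

lemma sum_deriv_form (n : ℕ) (ν : ℝ) (x : ℝ) :
    x * (∑ k ∈ range (n+1), lagCoeff n ν k * ((k:ℝ) * x^(k-1)))
      = ∑ k ∈ range (n+1), (k:ℝ) * lagCoeff n ν k * x^k := by
  rw [Finset.mul_sum]
  refine Finset.sum_congr rfl fun k _ => ?_
  cases k with
  | zero => simp
  | succ j =>
      simp only [Nat.add_sub_cancel]
      push_cast
      rw [pow_succ]
      ring

lemma lemA {ν : ℝ} (hν : -1 < ν) (m : ℕ) (x : ℝ) :
    x * (∑ k ∈ range (m+2), lagCoeff (m+1) ν k * ((k:ℝ) * x^(k-1)))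
      = ((m:ℝ)+1) * laguerrePoly (m+1) ν x - ((m:ℝ)+1+ν) * laguerrePoly m ν x := by
  have h1 : ∀ k ∈ range (m+1), (k:ℝ) * lagCoeff (m+1) ν k * x^k
      = (((m:ℝ)+1) * (lagCoeff (m+1) ν k * x^k) - ((m:ℝ)+1+ν) * (lagCoeff m ν k * x^k)) := by
    intro k hk
    have h := keyA hν m k (Nat.lt_succ_iff.mp (Finset.mem_range.mp hk))
    calc (k:ℝ) * lagCoeff (m+1) ν k * x^k = ((k:ℝ) * lagCoeff (m+1) ν k) * x^k := by ring
      _ = (((m:ℝ)+1) * lagCoeff (m+1) ν k - ((m:ℝ)+1+ν) * lagCoeff m ν k) * x^k := by rw [h]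
      _ = _ := by ring
  rw [show m + 2 = (m+1)+1 from rfl, sum_deriv_form, laguerrePoly_eq, laguerrePoly_eq]
  rw [Finset.sum_range_succ, Finset.sum_range_succ ((fun k => lagCoeff (m+1) ν k * x ^ k))]
  rw [Finset.sum_congr rfl h1, Finset.sum_sub_distrib, ← Finset.mul_sum, ← Finset.mul_sum]
  push_cast
  ring

lemma lemB {ν : ℝ} (hν : -1 < ν) (m : ℕ) (x : ℝ) :
    x * (∑ k ∈ range (m+1), lagCoeff m ν k * ((k:ℝ) * x^(k-1)))
      = ((m:ℝ)+1) * laguerrePoly (m+1) ν x - ((m:ℝ)+1+ν-x) * laguerrePoly m ν x := by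
  have hxP : x * laguerrePoly m ν x
      = (∑ k ∈ range m, lagCoeff m ν k * x^(k+1)) + lagCoeff m ν m * x^(m+1) := by
    rw [laguerrePoly_eq, Finset.mul_sum, Finset.sum_range_succ]
    congr 1
    · refine Finset.sum_congr rfl fun k _ => ?_
      rw [pow_succ]; ring
    · rw [pow_succ]; ring
  have hA := lemA hν m x
  have hLHS : x * (∑ k ∈ range (m+1), lagCoeff m ν k * ((k:ℝ) * x^(k-1)))
      = ∑ k ∈ range m, ((k:ℝ)+1) * lagCoeff m ν (k+1) * x^(k+1) := by
    rw [sum_deriv_form, Finset.sum_range_succ']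
    push_cast
    simp
  have hDn : x * (∑ k ∈ range (m+2), lagCoeff (m+1) ν k * ((k:ℝ) * x^(k-1)))
      = (∑ k ∈ range m, ((k:ℝ)+1) * lagCoeff (m+1) ν (k+1) * x^(k+1))
        + ((m:ℝ)+1) * lagCoeff (m+1) ν (m+1) * x^(m+1) := by
    rw [show m + 2 = (m+1)+1 from rfl, sum_deriv_form, Finset.sum_range_succ,
      Finset.sum_range_succ']
    push_cast
    simp
  have key : (∑ k ∈ range m, ((k:ℝ)+1) * lagCoeff m ν (k+1) * x^(k+1))
      = ((∑ k ∈ range m, ((k:ℝ)+1) * lagCoeff (m+1) ν (k+1) * x^(k+1))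
        + ((m:ℝ)+1) * lagCoeff (m+1) ν (m+1) * x^(m+1))
        + ((∑ k ∈ range m, lagCoeff m ν k * x^(k+1)) + lagCoeff m ν m * x^(m+1)) := by
    have hedge := keyB_edge hν m
    have hterm : ∀ k ∈ range m, ((k:ℝ)+1) * lagCoeff m ν (k+1) * x^(k+1)
        = ((k:ℝ)+1) * lagCoeff (m+1) ν (k+1) * x^(k+1) + lagCoeff m ν k * x^(k+1) := by
      intro k hk
      have h := keyB hν m k (Finset.mem_range.mp hk)
      have h2 : ((k:ℝ)+1) * lagCoeff m ν (k+1)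
          = ((k:ℝ)+1) * lagCoeff (m+1) ν (k+1) + lagCoeff m ν k := by linarith [h]
      calc ((k:ℝ)+1) * lagCoeff m ν (k+1) * x^(k+1)
          = (((k:ℝ)+1) * lagCoeff m ν (k+1)) * x^(k+1) := by ring
        _ = (((k:ℝ)+1) * lagCoeff (m+1) ν (k+1) + lagCoeff m ν k) * x^(k+1) := by rw [h2]
        _ = _ := by ring
    rw [Finset.sum_congr rfl hterm, Finset.sum_add_distrib]
    have h0 : ((m:ℝ)+1) * lagCoeff (m+1) ν (m+1) * x^(m+1) + lagCoeff m ν m * x^(m+1) = 0 := by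
      linear_combination (x^(m+1)) * hedge
    linarith [h0]
  rw [hLHS, key, ← hxP, ← hDn, hA]
  ring

lemma gammaPos' {ν : ℝ} (hν : -1 < ν) (m : ℕ) : 0 < Real.Gamma ((m : ℝ) + ν + 1) := by
  apply Real.Gamma_pos_of_pos
  have : (0:ℝ) ≤ (m:ℝ) := Nat.cast_nonneg m
  linarith

lemma gammaNatPos (m : ℕ) : 0 < Real.Gamma ((m : ℝ) + 1) := by
  apply Real.Gamma_pos_of_pos
  have : (0:ℝ) ≤ (m:ℝ) := Nat.cast_nonneg m
  linarith

lemma csqrt1 {ν : ℝ} (hν : -1 < ν) (m : ℕ) :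
    ((m:ℝ) + 1 + ν) * Real.sqrt (Real.Gamma ((↑(m+1):ℝ) + 1) / Real.Gamma ((↑(m+1):ℝ) + ν + 1))
      = Real.sqrt (((m:ℝ)+1) * ((m:ℝ)+1+ν))
        * Real.sqrt (Real.Gamma ((m:ℝ) + 1) / Real.Gamma ((m:ℝ) + ν + 1)) := by
  have hmν : (0:ℝ) < (m:ℝ) + 1 + ν := by
    have : (0:ℝ) ≤ (m:ℝ) := Nat.cast_nonneg m; linarith
  have hm1 : (0:ℝ) < (m:ℝ) + 1 := by positivity
  have hG1 : Real.Gamma ((↑(m+1):ℝ) + 1) = ((m:ℝ)+1) * Real.Gamma ((m:ℝ) + 1) := by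
    push_cast
    rw [show ((m:ℝ) + 1 + 1) = ((m:ℝ)+1) + 1 by ring, Real.Gamma_add_one hm1.ne']
  have hG2 : Real.Gamma ((↑(m+1):ℝ) + ν + 1) = ((m:ℝ)+1+ν) * Real.Gamma ((m:ℝ) + ν + 1) := by
    push_cast
    rw [show ((m:ℝ) + 1 + ν + 1) = ((m:ℝ)+ν+1) + 1 by ring, Real.Gamma_add_one (by linarith)]
    ring_nf
  have e1 : ((m:ℝ) + 1 + ν) = Real.sqrt (((m:ℝ)+1+ν)^2) := (Real.sqrt_sq hmν.le).symm
  nth_rewrite 1 [e1]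
  rw [← Real.sqrt_mul (sq_nonneg _), ← Real.sqrt_mul (mul_nonneg hm1.le hmν.le)]
  congr 1
  have h1 := (gammaPos' hν m).ne'
  have h2 := (gammaNatPos m).ne'
  rw [hG1, hG2]
  field_simp

lemma csqrt2 {ν : ℝ} (hν : -1 < ν) (m : ℕ) :
    ((m:ℝ) + 1) * Real.sqrt (Real.Gamma ((m:ℝ) + 1) / Real.Gamma ((m:ℝ) + ν + 1))
      = Real.sqrt (((m:ℝ)+1) * ((m:ℝ)+1+ν))
        * Real.sqrt (Real.Gamma ((↑(m+1):ℝ) + 1) / Real.Gamma ((↑(m+1):ℝ) + ν + 1)) := by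
  have hmν : (0:ℝ) < (m:ℝ) + 1 + ν := by
    have : (0:ℝ) ≤ (m:ℝ) := Nat.cast_nonneg m; linarith
  have hm1 : (0:ℝ) < (m:ℝ) + 1 := by positivity
  have hG1 : Real.Gamma ((↑(m+1):ℝ) + 1) = ((m:ℝ)+1) * Real.Gamma ((m:ℝ) + 1) := by
    push_cast
    rw [show ((m:ℝ) + 1 + 1) = ((m:ℝ)+1) + 1 by ring, Real.Gamma_add_one hm1.ne']
  have hG2 : Real.Gamma ((↑(m+1):ℝ) + ν + 1) = ((m:ℝ)+1+ν) * Real.Gamma ((m:ℝ) + ν + 1) := by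
    push_cast
    rw [show ((m:ℝ) + 1 + ν + 1) = ((m:ℝ)+ν+1) + 1 by ring, Real.Gamma_add_one (by linarith)]
    ring_nf
  have e1 : ((m:ℝ) + 1) = Real.sqrt (((m:ℝ)+1)^2) := (Real.sqrt_sq hm1.le).symm
  nth_rewrite 1 [e1]
  rw [← Real.sqrt_mul (sq_nonneg _), ← Real.sqrt_mul (mul_nonneg hm1.le hmν.le)]
  congr 1
  have h1 := (gammaPos' hν m).ne'
  have h2 := (gammaNatPos m).ne'
  rw [hG1, hG2]
  field_simp

lemma hasDerivAt_laguerrePoly (n : ℕ) (ν : ℝ) (x : ℝ) :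
    HasDerivAt (fun s => laguerrePoly n ν s)
      (∑ k ∈ Finset.range (n + 1), lagCoeff n ν k * ((k : ℝ) * x ^ (k - 1))) x := by
  simp only [laguerrePoly_eq]
  exact HasDerivAt.fun_sum fun k _ => (hasDerivAt_pow k x).const_mul (lagCoeff n ν k)

lemma hasDerivAt_exp_half (z : ℝ) :
    HasDerivAt (fun s : ℝ => Real.exp (-s / 2)) (Real.exp (-z / 2) * (-1 / 2)) z := by
  have h : HasDerivAt (fun s : ℝ => -s / 2) (-1 / 2) z := by
    simpa using ((hasDerivAt_id z).neg.div_const 2)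
  exact h.exp

lemma hasDerivAt_laguerreFun_top {ν : ℝ} (hν : -1 < ν) (m : ℕ) {z : ℝ} (hz : 0 < z) :
    HasDerivAt (fun s => laguerreFun (m+1) ν s)
      (((((m:ℝ)+1) + (ν - z)/2) * laguerreFun (m+1) ν z
        - Real.sqrt (((m:ℝ)+1)*((m:ℝ)+1+ν)) * laguerreFun m ν z) / z) z := by
  set c : ℝ := Real.sqrt (Real.Gamma ((↑(m+1):ℝ) + 1) / Real.Gamma ((↑(m+1):ℝ) + ν + 1)) with hc
  have hP := hasDerivAt_laguerrePoly (m+1) ν z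
  have hr : HasDerivAt (fun s : ℝ => s ^ (ν/2)) ((ν/2) * z ^ (ν/2 - 1)) z :=
    Real.hasDerivAt_rpow_const (Or.inl hz.ne')
  have he := hasDerivAt_exp_half z
  have hfull := ((hP.const_mul c).mul hr).mul he
  have hfun : (fun s => laguerreFun (m+1) ν s)
      = fun s => (c * laguerrePoly (m+1) ν s) * s ^ (ν/2) * Real.exp (-s / 2) := rfl
  rw [hfun]
  refine hfull.congr_deriv ?_
  symm
  have hz1 : z ^ (ν/2) = z ^ (ν/2 - 1) * z := by
    rw [← Real.rpow_add_one hz.ne' (ν/2 - 1)]; ring_nf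
  have hA := lemA hν m z
  have hcs := csqrt1 hν m
  rw [div_eq_iff hz.ne']
  unfold laguerreFun
  rw [← hc]
  simp only [Pi.mul_apply]
  linear_combination (-(c * z^(ν/2) * Real.exp (-z/2))) * hA
    + ((ν/2) * c * laguerrePoly (m+1) ν z * Real.exp (-z/2)) * hz1
    + (laguerrePoly m ν z * z^(ν/2) * Real.exp (-z/2)) * hcs

lemma hasDerivAt_laguerreFun_bot {ν : ℝ} (hν : -1 < ν) (m : ℕ) {z : ℝ} (hz : 0 < z) :
    HasDerivAt (fun s => laguerreFun m ν s)
      ((Real.sqrt (((m:ℝ)+1)*((m:ℝ)+1+ν)) * laguerreFun (m+1) ν z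
        - (((m:ℝ)+1) + (ν - z)/2) * laguerreFun m ν z) / z) z := by
  set c : ℝ := Real.sqrt (Real.Gamma ((m:ℝ) + 1) / Real.Gamma ((m:ℝ) + ν + 1)) with hc
  have hP := hasDerivAt_laguerrePoly m ν z
  have hr : HasDerivAt (fun s : ℝ => s ^ (ν/2)) ((ν/2) * z ^ (ν/2 - 1)) z :=
    Real.hasDerivAt_rpow_const (Or.inl hz.ne')
  have he := hasDerivAt_exp_half z
  have hfull := ((hP.const_mul c).mul hr).mul he
  have hfun : (fun s => laguerreFun m ν s)
      = fun s => (c * laguerrePoly m ν s) * s ^ (ν/2) * Real.exp (-s / 2) := rfl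
  rw [hfun]
  refine hfull.congr_deriv ?_
  symm
  have hz1 : z ^ (ν/2) = z ^ (ν/2 - 1) * z := by
    rw [← Real.rpow_add_one hz.ne' (ν/2 - 1)]; ring_nf
  have hB := lemB hν m z
  have hcs := csqrt2 hν m
  rw [div_eq_iff hz.ne']
  unfold laguerreFun
  rw [← hc]
  simp only [Pi.mul_apply]
  linear_combination (-(c * z^(ν/2) * Real.exp (-z/2))) * hB
    + ((ν/2) * c * laguerrePoly m ν z * Real.exp (-z/2)) * hz1
    - (laguerrePoly (m+1) ν z * z^(ν/2) * Real.exp (-z/2)) * hcs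

/-- the integral identity for the Laguerre Christoffel–Darboux kernel:
`(L_{n-1}^ν(x)L_n^ν(y) - L_{n-1}^ν(y)L_n^ν(x))/(x-y)
  = (1/2)∫₀¹ [L_{n-1}^ν(tx)L_n^ν(ty) + L_{n-1}^ν(ty)L_n^ν(tx)] dt`. -/
theorem stmt_4 (ν : ℝ) (hν : -1 < ν) (n : ℕ) (hn : 1 ≤ n) (x y : ℝ)
    (hx : 0 < x) (hy : 0 < y) (hxy : x ≠ y) :
    (laguerreFun (n - 1) ν x * laguerreFun n ν y -
        laguerreFun (n - 1) ν y * laguerreFun n ν x) / (x - y)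
      = (1 / 2) * ∫ t in (0 : ℝ)..1,
          (laguerreFun (n - 1) ν (t * x) * laguerreFun n ν (t * y) +
            laguerreFun (n - 1) ν (t * y) * laguerreFun n ν (t * x)) := by
  obtain ⟨m, rfl⟩ : ∃ m, n = m + 1 := ⟨n - 1, (Nat.succ_pred_eq_of_pos hn).symm⟩
  simp only [Nat.add_sub_cancel]
  have hxy' : x - y ≠ 0 := sub_ne_zero.mpr hxy
  set W : ℝ → ℝ := fun t => (laguerreFun m ν (t*x) * laguerreFun (m+1) ν (t*y)
      - laguerreFun m ν (t*y) * laguerreFun (m+1) ν (t*x)) / (x - y) with hWdef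
  set g : ℝ → ℝ := fun t => (1/2) * (laguerreFun m ν (t*x) * laguerreFun (m+1) ν (t*y)
      + laguerreFun m ν (t*y) * laguerreFun (m+1) ν (t*x)) with hgdef
  -- derivative of W at positive t
  have hWder : ∀ t : ℝ, 0 < t → HasDerivAt W (g t) t := by
    intro t ht
    have htx : 0 < t * x := mul_pos ht hx
    have hty : 0 < t * y := mul_pos ht hy
    have hmx : HasDerivAt (fun s : ℝ => s * x) x t := hasDerivAt_mul_const x
    have hmy : HasDerivAt (fun s : ℝ => s * y) y t := hasDerivAt_mul_const y
    have h1 : HasDerivAt (fun s : ℝ => laguerreFun m ν (s*x))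
        ((Real.sqrt (((m:ℝ)+1)*((m:ℝ)+1+ν)) * laguerreFun (m+1) ν (t*x)
          - (((m:ℝ)+1) + (ν - t*x)/2) * laguerreFun m ν (t*x)) / (t*x) * x) t :=
      HasDerivAt.comp t (hasDerivAt_laguerreFun_bot hν m htx) hmx
    have h2 : HasDerivAt (fun s : ℝ => laguerreFun m ν (s*y))
        ((Real.sqrt (((m:ℝ)+1)*((m:ℝ)+1+ν)) * laguerreFun (m+1) ν (t*y)
          - (((m:ℝ)+1) + (ν - t*y)/2) * laguerreFun m ν (t*y)) / (t*y) * y) t :=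
      HasDerivAt.comp t (hasDerivAt_laguerreFun_bot hν m hty) hmy
    have h3 : HasDerivAt (fun s : ℝ => laguerreFun (m+1) ν (s*x))
        (((((m:ℝ)+1) + (ν - t*x)/2) * laguerreFun (m+1) ν (t*x)
          - Real.sqrt (((m:ℝ)+1)*((m:ℝ)+1+ν)) * laguerreFun m ν (t*x)) / (t*x) * x) t :=
      HasDerivAt.comp t (hasDerivAt_laguerreFun_top hν m htx) hmx
    have h4 : HasDerivAt (fun s : ℝ => laguerreFun (m+1) ν (s*y))
        (((((m:ℝ)+1) + (ν - t*y)/2) * laguerreFun (m+1) ν (t*y)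
          - Real.sqrt (((m:ℝ)+1)*((m:ℝ)+1+ν)) * laguerreFun m ν (t*y)) / (t*y) * y) t :=
      HasDerivAt.comp t (hasDerivAt_laguerreFun_top hν m hty) hmy
    have H := ((h1.mul h4).sub (h2.mul h3)).div_const (x - y)
    refine H.congr_deriv ?_
    symm
    rw [hgdef]
    field_simp
    ring
  -- product formula for positive arguments scaled by t ≥ 0
  have hprod : ∀ (t a b : ℝ), 0 ≤ t → 0 < a → 0 < b →
      laguerreFun m ν (t*a) * laguerreFun (m+1) ν (t*b)
        = (Real.sqrt (Real.Gamma ((m:ℝ)+1)/Real.Gamma ((m:ℝ)+ν+1))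
            * Real.sqrt (Real.Gamma ((↑(m+1):ℝ)+1)/Real.Gamma ((↑(m+1):ℝ)+ν+1)))
          * (laguerrePoly m ν (t*a) * laguerrePoly (m+1) ν (t*b))
          * (t^ν * (a^(ν/2) * b^(ν/2))) * Real.exp (-(t*(a+b))/2) := by
    intro t a b ht ha hb
    unfold laguerreFun
    rw [Real.mul_rpow ht ha.le, Real.mul_rpow ht hb.le]
    have h2 : ν/2 + ν/2 = ν := by ring
    have e3 : t^(ν/2) * t^(ν/2) = t^ν := by
      rcases eq_or_ne ν 0 with h|h
      · simp [h]
      · rw [← Real.rpow_add' ht (by rw [h2]; exact h), h2]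
    have e5 : Real.exp (-(t*a)/2) * Real.exp (-(t*b)/2) = Real.exp (-(t*(a+b))/2) := by
      rw [← Real.exp_add]
      ring_nf
    rw [← e3, ← e5]
    ring
  -- the polynomial factorization
  set R : ℝ → ℝ := fun t => ∑ j ∈ Finset.range (m+1), ∑ k ∈ Finset.range (m+2),
      lagCoeff m ν j * lagCoeff (m+1) ν k * (x^j * y^k - y^j * x^k) * t^(j+k-1) with hRdef
  have hQ : ∀ t : ℝ, laguerrePoly m ν (t*x) * laguerrePoly (m+1) ν (t*y)
      - laguerrePoly m ν (t*y) * laguerrePoly (m+1) ν (t*x) = t * R t := by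
    intro t
    rw [hRdef, laguerrePoly_eq, laguerrePoly_eq, laguerrePoly_eq, laguerrePoly_eq,
      Finset.sum_mul_sum, Finset.sum_mul_sum, ← Finset.sum_sub_distrib, Finset.mul_sum]
    refine Finset.sum_congr rfl fun j _ => ?_
    rw [← Finset.sum_sub_distrib, Finset.mul_sum]
    refine Finset.sum_congr rfl fun k _ => ?_
    rcases Nat.eq_zero_or_pos (j + k) with h|h
    · have hj : j = 0 := by omega
      have hk : k = 0 := by omega
      subst hj; subst hk
      simp
    · obtain ⟨l, hl⟩ : ∃ l, j + k = l + 1 := ⟨j + k - 1, by omega⟩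
      have hl' : j + k - 1 = l := by omega
      have ht : t^j * t^k = t * t^(j+k-1) := by
        rw [← pow_add, hl, Nat.add_sub_cancel, pow_succ]
        ring
      rw [mul_pow, mul_pow, mul_pow, mul_pow, hl']
      calc lagCoeff m ν j * (t^j * x^j) * (lagCoeff (m+1) ν k * (t^k * y^k))
            - lagCoeff m ν j * (t^j * y^j) * (lagCoeff (m+1) ν k * (t^k * x^k))
          = lagCoeff m ν j * lagCoeff (m+1) ν k * (x^j * y^k - y^j * x^k) * (t^j * t^k) := by
            ring
        _ = _ := by rw [ht, hl']; ring
  -- the comparison function G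
  set C : ℝ := Real.sqrt (Real.Gamma ((m:ℝ)+1)/Real.Gamma ((m:ℝ)+ν+1))
      * Real.sqrt (Real.Gamma ((↑(m+1):ℝ)+1)/Real.Gamma ((↑(m+1):ℝ)+ν+1))
      * (x^(ν/2) * y^(ν/2)) / (x-y) with hCdef
  set G : ℝ → ℝ := fun t => C * (t^(ν+1) * (Real.exp (-(t*(x+y))/2) * R t)) with hGdef
  have hRc : Continuous R := by
    rw [hRdef]
    apply continuous_finset_sum
    intro j _
    apply continuous_finset_sum
    intro k _
    exact continuous_const.mul (continuous_pow _)
  have hGcont : Continuous G := by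
    rw [hGdef]
    have hpow : Continuous fun t : ℝ => t^(ν+1) :=
      continuous_iff_continuousAt.2 fun t =>
        Real.continuousAt_rpow_const t (ν+1) (Or.inr (by linarith))
    have hexp : Continuous fun t : ℝ => Real.exp (-(t*(x+y))/2) := by fun_prop
    exact continuous_const.mul (hpow.mul (hexp.mul hRc))
  have hWG : Set.EqOn W G (Set.Icc 0 1) := by
    intro t ht
    have ht0 : (0:ℝ) ≤ t := ht.1
    have e4 : t^ν * t = t^(ν+1) := by
      rcases eq_or_ne t 0 with h|h
      · subst h
        rw [Real.zero_rpow (by linarith : ν + 1 ≠ 0)]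
        ring
      · rw [Real.rpow_add_one h]
    have hQt := hQ t
    rw [hWdef, hGdef, hCdef]
    simp only
    rw [hprod t x y ht0 hx hy, hprod t y x ht0 hy hx,
      show y + x = x + y from add_comm y x]
    linear_combination
      ((Real.sqrt (Real.Gamma ((m:ℝ)+1)/Real.Gamma ((m:ℝ)+ν+1))
        * Real.sqrt (Real.Gamma ((↑(m+1):ℝ)+1)/Real.Gamma ((↑(m+1):ℝ)+ν+1)))
        * (t^ν * (x^(ν/2) * y^(ν/2))) * Real.exp (-(t*(x+y))/2) / (x-y)) * hQt
      + ((Real.sqrt (Real.Gamma ((m:ℝ)+1)/Real.Gamma ((m:ℝ)+ν+1))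
        * Real.sqrt (Real.Gamma ((↑(m+1):ℝ)+1)/Real.Gamma ((↑(m+1):ℝ)+ν+1)))
        * (x^(ν/2) * y^(ν/2)) * Real.exp (-(t*(x+y))/2) * R t / (x-y)) * e4
  have hWcont : ContinuousOn W (Set.Icc 0 1) := hGcont.continuousOn.congr hWG
  -- integrability of g
  have hgint : IntervalIntegrable g MeasureTheory.volume 0 1 := by
    set S : ℝ → ℝ := fun t => (1/2) * ((Real.sqrt (Real.Gamma ((m:ℝ)+1)/Real.Gamma ((m:ℝ)+ν+1))
        * Real.sqrt (Real.Gamma ((↑(m+1):ℝ)+1)/Real.Gamma ((↑(m+1):ℝ)+ν+1)))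
        * (laguerrePoly m ν (t*x) * laguerrePoly (m+1) ν (t*y)
          + laguerrePoly m ν (t*y) * laguerrePoly (m+1) ν (t*x))
        * (x^(ν/2) * y^(ν/2)) * Real.exp (-(t*(x+y))/2)) with hSdef
    have hPc : ∀ (j : ℕ) (c : ℝ), Continuous fun t : ℝ => laguerrePoly j ν (t*c) := by
      intro j c
      simp only [laguerrePoly_eq]
      apply continuous_finset_sum
      intro k _
      exact continuous_const.mul ((continuous_id.mul continuous_const).pow k)
    have hSc : Continuous S := by
      rw [hSdef]
      have := hPc m x
      have := hPc m y
      have := hPc (m+1) x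
      have := hPc (m+1) y
      fun_prop
    have h1 : IntervalIntegrable (fun t : ℝ => t^ν) MeasureTheory.volume 0 1 :=
      intervalIntegral.intervalIntegrable_rpow' hν
    have h2 := h1.mul_continuousOn hSc.continuousOn
    rw [intervalIntegrable_iff] at h2 ⊢
    apply h2.congr_fun ?_ measurableSet_uIoc
    intro t ht
    rw [Set.uIoc_of_le zero_le_one] at ht
    rw [hgdef, hSdef]
    simp only
    rw [hprod t x y ht.1.le hx hy, hprod t y x ht.1.le hy hx,
      show y + x = x + y from add_comm y x]
    ring
  -- FTC
  have hfund := intervalIntegral.integral_eq_sub_of_hasDeriv_right_of_le zero_le_one hWcont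
    (fun t ht => (hWder t ht.1).hasDerivWithinAt) hgint
  have hW0 : W 0 = 0 := by
    rw [hWdef]
    simp
  have hW1 : W 1 = (laguerreFun m ν x * laguerreFun (m+1) ν y
      - laguerreFun m ν y * laguerreFun (m+1) ν x) / (x - y) := by
    rw [hWdef]
    simp
  rw [hW0, hW1, sub_zero] at hfund
  rw [← hfund, hgdef]
  rw [intervalIntegral.integral_const_mul]
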